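/- Let k ≥ 0 be an integer and let φ : ℝ → ℝ be k times continuously differentiable. Then for every y ∈ ℝ, the k-th derivative of the function a ↦ (1/a)·φ(y/a), evaluated at a = 1, equals (−1)^k times the k-th derivative of the function u ↦ u^k·φ(u), evaluated at u = y; that is, (d/da)^k [a^{−1} φ(y/a)] |_{a=1} = (−1)^k (d/du)^k [u^k φ(u)] |_{u=y}. -/

import Mathlib

lemma auxA (n : ℕ) (g : ℝ → ℝ) (hg : ContDiff ℝ ((n+1 : ℕ) : ℕ∞) g) (x : ℝ) :
    iteratedDeriv (n+1) (fun u : ℝ => u * g u) x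
      = x * iteratedDeriv (n+1) g x + (n+1) * iteratedDeriv n g x := by
  induction n generalizing x with
  | zero =>
      have hd : DifferentiableAt ℝ g x := (hg.differentiable (by simp)).differentiableAt
      have h1 : HasDerivAt (fun u : ℝ => u * g u) (1 * g x + x * deriv g x) x :=
        (hasDerivAt_id x).mul hd.hasDerivAt
      simp only [iteratedDeriv_succ, iteratedDeriv_zero]
      rw [h1.deriv]; ring
  | succ n ih =>
      have hg' : ContDiff ℝ ((n+1 : ℕ) : ℕ∞) g := hg.of_le (by exact_mod_cast Nat.le_succ (n+1))
      have heq : iteratedDeriv (n+1) (fun u : ℝ => u * g u)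
          = fun x => x * iteratedDeriv (n+1) g x + (n+1) * iteratedDeriv n g x :=
        funext fun x => ih hg' x
      rw [iteratedDeriv_succ, heq]
      have hdn : DifferentiableAt ℝ (iteratedDeriv n g) x :=
        (hg.differentiable_iteratedDeriv n (by exact_mod_cast Nat.lt_succ_of_lt (Nat.lt_succ_self n))).differentiableAt
      have hdn1 : DifferentiableAt ℝ (iteratedDeriv (n+1) g) x :=
        (hg.differentiable_iteratedDeriv (n+1) (by exact_mod_cast Nat.lt_succ_self (n+1))).differentiableAt
      have h1 : HasDerivAt (fun x : ℝ => x * iteratedDeriv (n+1) g x + (n+1) * iteratedDeriv n g x)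
          ((1 * iteratedDeriv (n+1) g x + x * deriv (iteratedDeriv (n+1) g) x)
            + (n+1) * deriv (iteratedDeriv n g) x) x :=
        ((hasDerivAt_id x).mul hdn1.hasDerivAt).add (hdn.hasDerivAt.const_mul ((n:ℝ)+1))
      rw [h1.deriv, ← iteratedDeriv_succ, ← iteratedDeriv_succ]
      push_cast; ring

lemma auxB (y : ℝ) : ∀ (j : ℕ) (φ : ℝ → ℝ), ContDiff ℝ (j : ℕ∞) φ → ∀ a : ℝ, a ≠ 0 →
    iteratedDeriv j (fun a : ℝ => a⁻¹ * φ (y / a)) a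
      = (-1 : ℝ) ^ j * (a⁻¹) ^ (j+1) * iteratedDeriv j (fun u : ℝ => u ^ j * φ u) (y / a) := by
  intro j
  induction j with
  | zero => intro φ hφ a ha; simp
  | succ j ih =>
      intro φ hφ a ha
      have hφj : ContDiff ℝ (j : ℕ∞) φ := hφ.of_le (by exact_mod_cast Nat.le_succ j)
      set g : ℝ → ℝ := fun u => u ^ j * φ u with hgdef
      have hg : ContDiff ℝ ((j+1 : ℕ) : ℕ∞) g := (contDiff_id.pow j).mul hφ
      set G : ℝ → ℝ := iteratedDeriv j g with hGdef
      set H : ℝ → ℝ := iteratedDeriv (j+1) g with hHdef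
      have hev : iteratedDeriv j (fun a : ℝ => a⁻¹ * φ (y / a))
          =ᶠ[nhds a] fun x => (-1 : ℝ) ^ j * (x⁻¹) ^ (j+1) * G (y / x) := by
        filter_upwards [isOpen_compl_singleton.mem_nhds (by simpa using ha :
          a ∈ ({0}ᶜ : Set ℝ))] with x hx
        exact ih φ hφj x (by simpa using hx)
      rw [iteratedDeriv_succ, hev.deriv_eq]
      -- derivative computation
      have hinv : HasDerivAt (fun x : ℝ => x⁻¹) (-(a^2)⁻¹) a := hasDerivAt_inv ha
      have hpow : HasDerivAt (fun x : ℝ => (x⁻¹) ^ (j+1))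
          ((((j:ℝ)+1) * (a⁻¹) ^ j) * (-(a^2)⁻¹)) a := by
        have := (hasDerivAt_pow (j+1) (a⁻¹ : ℝ)).comp a hinv
        simpa only [Function.comp_def, Nat.add_sub_cancel, Nat.cast_add, Nat.cast_one] using this
      have hyx : HasDerivAt (fun x : ℝ => y / x) (y * (-(a^2)⁻¹)) a := by
        simpa [div_eq_mul_inv] using hinv.const_mul y
      have hGd : HasDerivAt G (H (y / a)) (y / a) := by
        have hd : DifferentiableAt ℝ G (y / a) :=
          (hg.differentiable_iteratedDeriv j (by exact_mod_cast Nat.lt_succ_self j)).differentiableAt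
        have := hd.hasDerivAt
        rwa [hGdef, show deriv (iteratedDeriv j g) = iteratedDeriv (j+1) g from (iteratedDeriv_succ).symm] at this
      have hGcomp : HasDerivAt (fun x : ℝ => G (y / x)) (H (y / a) * (y * (-(a^2)⁻¹))) a :=
        hGd.comp a hyx
      have hfull : HasDerivAt (fun x : ℝ => (-1 : ℝ) ^ j * (x⁻¹) ^ (j+1) * G (y / x))
          ((-1 : ℝ) ^ j * (((((j:ℝ)+1) * (a⁻¹) ^ j) * (-(a^2)⁻¹)) * G (y / a)
            + (a⁻¹) ^ (j+1) * (H (y / a) * (y * (-(a^2)⁻¹))))) a := by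
        have := (hpow.mul hGcomp).const_mul ((-1 : ℝ) ^ j)
        simpa [mul_assoc, mul_comm, mul_left_comm] using this
      rw [hfull.deriv]
      -- RHS : use auxA
      have hfun : (fun u : ℝ => u ^ (j+1) * φ u) = fun u => u * (u ^ j * φ u) := by
        funext u; ring
      have hA : iteratedDeriv (j+1) (fun u : ℝ => u ^ (j+1) * φ u) (y / a)
          = (y / a) * H (y / a) + ((j:ℝ)+1) * G (y / a) := by
        rw [hfun]
        have := auxA j g hg (y / a)
        push_cast at this ⊢
        simpa [hgdef] using this
      rw [hA]
      field_simp
      have h1 : a * a⁻¹ = 1 := mul_inv_cancel₀ ha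
      linear_combination ((((j:ℝ) + 1) * a⁻¹ ^ j * G (y / a) * (1 + a * a⁻¹) * (-1) ^ j + a⁻¹ * a⁻¹ ^ j * y * H (y / a) * (-1) ^ j)) * h1

/-- For a `C^k` function `φ` on `ℝ`,
`(d/da)^k [a⁻¹ φ(y/a)] |_{a=1} = (−1)^k (d/du)^k [u^k φ(u)] |_{u=y}`. -/
theorem stmt17
    (k : ℕ) (φ : ℝ → ℝ) (hφ : ContDiff ℝ (k : ℕ∞) φ) (y : ℝ) :
    iteratedDeriv k (fun a : ℝ => a⁻¹ * φ (y / a)) 1 =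
      (-1 : ℝ) ^ k * iteratedDeriv k (fun u : ℝ => u ^ k * φ u) y := by
  have := auxB y k φ hφ 1 one_ne_zero
  simpa using this
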